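/- arXiv:2112.02362 — 6 statements merged into one kernel-verified Lean document; each statement's English description precedes it below -/
import Mathlib

section
/- If R(m-1, k) and R(m, k-1) are both even (for m, k ≥ 2), then R(m, k) < R(m-1, k) + R(m, k-1), i.e., the Ramsey recurrence inequality is strict. -/
/-- `hasRamsey N m k` : every red/blue (true/false) edge-coloring of the complete
graph on `N` vertices contains a red clique of size `m` or a blue clique of size `k`. -/
def hasRamsey (N m k : ℕ) : Prop :=
  ∀ c : Fin N → Fin N → Bool, (∀ i j, c i j = c j i) →
    (∃ s : Finset (Fin N), s.card = m ∧ ∀ i ∈ s, ∀ j ∈ s, i ≠ j → c i j = true) ∨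
    (∃ s : Finset (Fin N), s.card = k ∧ ∀ i ∈ s, ∀ j ∈ s, i ≠ j → c i j = false)

/-- The Ramsey number `R m k`, the least `N` with the Ramsey property. -/
noncomputable def ramseyNumber (m k : ℕ) : ℕ := sInf {N | hasRamsey N m k}

open Finset

lemma hasRamsey_symm {N m k : ℕ} (h : hasRamsey N m k) : hasRamsey N k m := by
  intro c hc
  rcases h (fun i j => !c i j) (fun i j => by simp [hc i j]) with ⟨s, hs, hr⟩ | ⟨s, hs, hb⟩
  · right
    exact ⟨s, hs, fun i hi j hj hij => by simpa using hr i hi j hj hij⟩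
  · left
    exact ⟨s, hs, fun i hi j hj hij => by simpa using hb i hi j hj hij⟩

lemma hasRamsey_subset {p m k n : ℕ} (h : hasRamsey p m k) (c : Fin n → Fin n → Bool)
    (hc : ∀ i j, c i j = c j i) (S : Finset (Fin n)) (hS : S.card = p) :
    (∃ s : Finset (Fin n), s ⊆ S ∧ s.card = m ∧ ∀ i ∈ s, ∀ j ∈ s, i ≠ j → c i j = true) ∨
    (∃ s : Finset (Fin n), s ⊆ S ∧ s.card = k ∧ ∀ i ∈ s, ∀ j ∈ s, i ≠ j → c i j = false) := by
  classical
  have hcard : Fintype.card S = p := by simpa [Fintype.card_coe] using hS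
  let e : Fin p ≃ S := (Fintype.equivFinOfCardEq hcard).symm
  have hinj : Function.Injective (fun i : Fin p => (e i : Fin n)) :=
    fun a b hab => e.injective (Subtype.ext hab)
  rcases h (fun i j => c (e i) (e j)) (fun i j => hc _ _) with ⟨s, hs, hcl⟩ | ⟨s, hs, hcl⟩
  · left
    refine ⟨s.image (fun i => (e i : Fin n)), ?_, ?_, ?_⟩
    · intro x hx
      rcases Finset.mem_image.1 hx with ⟨a, _, rfl⟩
      exact (e a).2
    · rw [Finset.card_image_of_injective _ hinj, hs]
    · intro i hi j hj hij
      rcases Finset.mem_image.1 hi with ⟨x, hx, rfl⟩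
      rcases Finset.mem_image.1 hj with ⟨y, hy, rfl⟩
      exact hcl x hx y hy (fun hxy => hij (by rw [hxy]))
  · right
    refine ⟨s.image (fun i => (e i : Fin n)), ?_, ?_, ?_⟩
    · intro x hx
      rcases Finset.mem_image.1 hx with ⟨a, _, rfl⟩
      exact (e a).2
    · rw [Finset.card_image_of_injective _ hinj, hs]
    · intro i hi j hj hij
      rcases Finset.mem_image.1 hi with ⟨x, hx, rfl⟩
      rcases Finset.mem_image.1 hj with ⟨y, hy, rfl⟩
      exact hcl x hx y hy (fun hxy => hij (by rw [hxy]))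

lemma hasRamsey_extend {a m k n : ℕ} (h : hasRamsey a m k) (c : Fin n → Fin n → Bool)
    (hc : ∀ i j, c i j = c j i) (v : Fin n)
    (hA : a ≤ ((Finset.univ.erase v).filter (fun w => c v w = true)).card) :
    (∃ s : Finset (Fin n), s.card = m + 1 ∧ ∀ i ∈ s, ∀ j ∈ s, i ≠ j → c i j = true) ∨
    (∃ s : Finset (Fin n), s.card = k ∧ ∀ i ∈ s, ∀ j ∈ s, i ≠ j → c i j = false) := by
  classical
  obtain ⟨S, hSsub, hScard⟩ := Finset.exists_subset_card_eq hA
  rcases hasRamsey_subset h c hc S hScard with ⟨s, hsS, hcard, hcl⟩ | ⟨s, hsS, hcard, hcl⟩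
  · left
    have hv : v ∉ s := by
      intro hv
      have := hSsub (hsS hv)
      simp [Finset.mem_filter, Finset.mem_erase] at this
    have hred : ∀ w ∈ s, c v w = true := by
      intro w hw
      exact (Finset.mem_filter.1 (hSsub (hsS hw))).2
    refine ⟨insert v s, ?_, ?_⟩
    · rw [Finset.card_insert_of_notMem hv, hcard]
    · intro i hi j hj hij
      rcases Finset.mem_insert.1 hi with rfl | hi' <;> rcases Finset.mem_insert.1 hj with rfl | hj'
      · exact absurd rfl hij
      · exact hred j hj'
      · rw [hc]; exact hred i hi'
      · exact hcl i hi' j hj' hij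
  · right
    exact ⟨s, hcard, hcl⟩

lemma not_hasRamsey_zero {m k : ℕ} (hm : 1 ≤ m) (hk : 1 ≤ k) : ¬ hasRamsey 0 m k := by
  intro h
  rcases h (fun _ _ => true) (fun _ _ => rfl) with ⟨s, hs, _⟩ | ⟨s, hs, _⟩ <;>
  · have hle : s.card ≤ 0 := by simpa using Finset.card_le_univ s
    omega

lemma hasRamsey_exists (m k : ℕ) : ∃ N, hasRamsey N m k := by
  classical
  induction m generalizing k with
  | zero => exact ⟨0, fun c hc => Or.inl ⟨∅, rfl, by simp⟩⟩
  | succ m ihm =>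
    induction k with
    | zero => exact ⟨0, fun c hc => Or.inr ⟨∅, rfl, by simp⟩⟩
    | succ k ihk =>
      obtain ⟨a, ha⟩ := ihm (k + 1)
      obtain ⟨b, hb⟩ := ihk
      refine ⟨a + b + 1, ?_⟩
      intro c hc
      have hv : (0 : ℕ) < a + b + 1 := by omega
      set v : Fin (a + b + 1) := ⟨0, hv⟩ with hvdef
      have hcardE : (Finset.univ.erase v).card = a + b := by
        rw [Finset.card_erase_of_mem (Finset.mem_univ v), Finset.card_univ, Fintype.card_fin]
        omega
      have hDE := Finset.card_filter_add_card_filter_not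
        (s := Finset.univ.erase v) (p := fun w => c v w = true)
      rw [hcardE] at hDE
      by_cases hA : a ≤ ((Finset.univ.erase v).filter (fun w => c v w = true)).card
      · exact hasRamsey_extend ha c hc v hA
      · have hB : b ≤ ((Finset.univ.erase v).filter (fun w => ¬ c v w = true)).card := by omega
        have hB' : b ≤ ((Finset.univ.erase v).filter (fun w => (!c v w) = true)).card := by
          have heq : (Finset.univ.erase v).filter (fun w => ¬ c v w = true) =
              (Finset.univ.erase v).filter (fun w => (!c v w) = true) := by
            apply Finset.filter_congr
            intro w _
            simp
          rwa [heq] at hB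
        rcases hasRamsey_extend (hasRamsey_symm hb) (fun i j => !c i j)
            (fun i j => by simp [hc i j]) v hB' with ⟨s, hs, hcl⟩ | ⟨s, hs, hcl⟩
        · exact Or.inr ⟨s, hs, fun i hi j hj hij => by simpa using hcl i hi j hj hij⟩
        · exact Or.inl ⟨s, hs, fun i hi j hj hij => by simpa using hcl i hi j hj hij⟩

lemma hasRamsey_step {a b M K : ℕ} (hM : 2 ≤ M) (hK : 2 ≤ K)
    (ha : hasRamsey a (M - 1) K) (hb : hasRamsey b M (K - 1))
    (hea : Even a) (heb : Even b) (ha1 : 1 ≤ a) (hb1 : 1 ≤ b) :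
    hasRamsey (a + b - 1) M K := by
  classical
  intro c hc
  by_cases hA : ∃ v : Fin (a + b - 1), a ≤ ((Finset.univ.erase v).filter (fun w => c v w = true)).card
  · obtain ⟨v, hv⟩ := hA
    rcases hasRamsey_extend ha c hc v hv with ⟨s, hs, hcl⟩ | hblue
    · exact Or.inl ⟨s, by omega, hcl⟩
    · exact Or.inr hblue
  · by_cases hB : ∃ v : Fin (a + b - 1), b ≤ ((Finset.univ.erase v).filter (fun w => c v w = false)).card
    · obtain ⟨v, hv⟩ := hB
      have hv' : b ≤ ((Finset.univ.erase v).filter (fun w => (!c v w) = true)).card := by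
        have heq : (Finset.univ.erase v).filter (fun w => c v w = false) =
            (Finset.univ.erase v).filter (fun w => (!c v w) = true) := by
          apply Finset.filter_congr
          intro w _
          simp
        rwa [heq] at hv
      rcases hasRamsey_extend (hasRamsey_symm hb) (fun i j => !c i j)
          (fun i j => by simp [hc i j]) v hv' with ⟨s, hs, hcl⟩ | ⟨s, hs, hcl⟩
      · exact Or.inr ⟨s, by omega, fun i hi j hj hij => by simpa using hcl i hi j hj hij⟩
      · exact Or.inl ⟨s, hs, fun i hi j hj hij => by simpa using hcl i hi j hj hij⟩
    · exfalso
      push_neg at hA hB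
      have hDE : ∀ v : Fin (a + b - 1),
          ((Finset.univ.erase v).filter (fun w => c v w = true)).card +
          ((Finset.univ.erase v).filter (fun w => c v w = false)).card = (a + b - 1) - 1 := by
        intro v
        have h1 := Finset.card_filter_add_card_filter_not
          (s := Finset.univ.erase v) (p := fun w => c v w = true)
        have h2 : (Finset.univ.erase v).filter (fun w => ¬ c v w = true) =
            (Finset.univ.erase v).filter (fun w => c v w = false) := by
          apply Finset.filter_congr
          intro w _
          simp [Bool.not_eq_true]
        rw [h2] at h1
        rw [h1, Finset.card_erase_of_mem (Finset.mem_univ v), Finset.card_univ, Fintype.card_fin]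
      have hD : ∀ v : Fin (a + b - 1),
          ((Finset.univ.erase v).filter (fun w => c v w = true)).card = a - 1 := by
        intro v
        have h1 := hDE v
        have h2 := hA v
        have h3 := hB v
        omega
      set P : Finset (Fin (a + b - 1) × Fin (a + b - 1)) :=
        Finset.univ.filter (fun x => x.1 ≠ x.2 ∧ c x.1 x.2 = true) with hP
      have hPcard : P.card =
          ∑ v : Fin (a + b - 1), ((Finset.univ.erase v).filter (fun w => c v w = true)).card := by
        rw [Finset.card_eq_sum_card_fiberwise
          (f := Prod.fst) (t := Finset.univ) (fun x _ => Finset.mem_univ _)]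
        refine Finset.sum_congr rfl ?_
        intro v _
        apply Finset.card_nbij' (i := fun x => x.2) (j := fun w => (v, w))
        · intro x hx
          simp only [hP, Finset.mem_coe, Finset.mem_filter, Finset.mem_univ, true_and] at hx
          obtain ⟨⟨hne, hcol⟩, hfst⟩ := hx
          subst hfst
          simp only [Finset.mem_coe, Finset.mem_filter, Finset.mem_erase, Finset.mem_univ, true_and, and_true]
          exact ⟨Ne.symm hne, hcol⟩
        · intro w hw
          simp only [Finset.mem_coe, Finset.mem_filter, Finset.mem_erase, Finset.mem_univ, true_and, and_true] at hw
          simp only [hP, Finset.mem_coe, Finset.mem_filter, Finset.mem_univ, true_and]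
          exact ⟨⟨Ne.symm hw.1, hw.2⟩, trivial⟩
        · intro x hx
          simp only [hP, Finset.mem_coe, Finset.mem_filter, Finset.mem_univ, true_and] at hx
          obtain ⟨_, hfst⟩ := hx
          exact Prod.ext hfst.symm rfl
        · intro w _
          rfl
      have hPeven : Even P.card := by
        have hsum : ∑ _x ∈ P, (1 : ZMod 2) = 0 := by
          apply Finset.sum_involution (g := fun x _ => (x.2, x.1))
          · intro x hx
            decide
          · intro x hx _
            have hx' := (Finset.mem_filter.1 hx).2
            intro heq
            exact hx'.1 (congrArg Prod.fst heq).symm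
          · intro x hx
            have hx' := (Finset.mem_filter.1 hx).2
            refine Finset.mem_filter.2 ⟨Finset.mem_univ _, Ne.symm hx'.1, ?_⟩
            rw [hc]
            exact hx'.2
          · intro x hx
            rfl
        have hcast : (P.card : ZMod 2) = 0 := by
          have : ∑ _x ∈ P, (1 : ZMod 2) = (P.card : ZMod 2) := by
            simp
          rwa [this] at hsum
        have hdvd := (ZMod.natCast_eq_zero_iff P.card 2).1 hcast
        exact even_iff_two_dvd.mpr hdvd
      have hsum2 :
          ∑ v : Fin (a + b - 1), ((Finset.univ.erase v).filter (fun w => c v w = true)).card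
            = (a + b - 1) * (a - 1) := by
        rw [Finset.sum_congr rfl (fun v _ => hD v)]
        simp [Finset.card_univ, mul_comm]
      have hodd : Odd ((a + b - 1) * (a - 1)) := by
        have hna : Odd (a + b - 1) := by
          have heab : Even (a + b) := hea.add heb
          exact Nat.Even.sub_odd (by omega : 1 ≤ a + b) heab odd_one
        have ha' : Odd (a - 1) := Nat.Even.sub_odd ha1 hea odd_one
        exact hna.mul ha'
      rw [hPcard, hsum2] at hPeven
      exact (Nat.not_odd_iff_even.mpr hPeven) hodd

/-- If `R(m-1, k)` and `R(m, k-1)` are both even (`m, k ≥ 2`), then the Ramsey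
recurrence inequality is strict: `R(m, k) < R(m-1, k) + R(m, k-1)`. -/
theorem ramsey_recurrence_strict (m k : ℕ) (hm : 2 ≤ m) (hk : 2 ≤ k)
    (h1 : Even (ramseyNumber (m - 1) k)) (h2 : Even (ramseyNumber m (k - 1))) :
    ramseyNumber m k < ramseyNumber (m - 1) k + ramseyNumber m (k - 1) := by
  have ha : hasRamsey (ramseyNumber (m - 1) k) (m - 1) k :=
    Nat.sInf_mem (hasRamsey_exists (m - 1) k)
  have hb : hasRamsey (ramseyNumber m (k - 1)) m (k - 1) :=
    Nat.sInf_mem (hasRamsey_exists m (k - 1))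
  have ha1 : 1 ≤ ramseyNumber (m - 1) k := by
    by_contra h
    have h0 : ramseyNumber (m - 1) k = 0 := by omega
    exact not_hasRamsey_zero (by omega) (by omega) (h0 ▸ ha)
  have hb1 : 1 ≤ ramseyNumber m (k - 1) := by
    by_contra h
    have h0 : ramseyNumber m (k - 1) = 0 := by omega
    exact not_hasRamsey_zero (by omega) (by omega) (h0 ▸ hb)
  have hstep := hasRamsey_step hm hk ha hb h1 h2 ha1 hb1
  have hle : ramseyNumber m k ≤ ramseyNumber (m - 1) k + ramseyNumber m (k - 1) - 1 :=
    Nat.sInf_le hstep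
  omega
end

section
/- The Ramsey number R(3, 4) equals 9: every 2-coloring of the edges of K_9 contains a red triangle or a blue K_4, and there is a 2-coloring of K_8 with neither. -/
open Finset

lemma bool_resolve {x b : Bool} (h : x ≠ b) : x = !b := by
  cases x <;> cases b <;> simp_all

/-- R(3,3) ≤ 6, localized: in any 6-set there is a monochromatic triangle. -/
lemma ramsey33 {N : ℕ} (c : Fin N → Fin N → Bool) (hsym : ∀ i j, c i j = c j i)
    (t : Finset (Fin N)) (ht : t.card = 6) :
    ∃ b : Bool, ∃ u : Finset (Fin N), u ⊆ t ∧ u.card = 3 ∧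
      ∀ i ∈ u, ∀ j ∈ u, i ≠ j → c i j = b := by
  obtain ⟨x, hxt⟩ := Finset.card_pos.mp (by omega : 0 < t.card)
  set t' := t.erase x with ht'
  have ht'5 : t'.card = 5 := by rw [ht', Finset.card_erase_of_mem hxt, ht]
  have hsplit' : (t'.filter fun j => c x j = true).card
      + (t'.filter fun j => c x j = false).card = 5 := by
    have hsplit := Finset.card_filter_add_card_filter_not
      (s := t') (p := fun j => c x j = true)
    rw [← ht'5, ← hsplit]
    congr 2
    ext j
    simp
  obtain ⟨b, hb3⟩ : ∃ b : Bool, 3 ≤ (t'.filter fun j => c x j = b).card := by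
    by_contra hcon
    push_neg at hcon
    have hA := hcon true
    have hB := hcon false
    omega
  obtain ⟨u, hu_sub, hu3⟩ := Finset.exists_subset_card_eq hb3
  have hadj : ∀ j ∈ u, c x j = b := fun j hj => (Finset.mem_filter.mp (hu_sub hj)).2
  have hut' : u ⊆ t' := fun j hj => (Finset.mem_filter.mp (hu_sub hj)).1
  have hut : u ⊆ t := hut'.trans (Finset.erase_subset _ _)
  have hxu : x ∉ u := fun hx => (Finset.mem_erase.mp (hut' hx)).1 rfl
  by_cases hpq : ∃ p ∈ u, ∃ q ∈ u, p ≠ q ∧ c p q = b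
  · obtain ⟨p, hp, q, hq, hpqne, hcpq⟩ := hpq
    have cxp := hadj p hp
    have cxq := hadj q hq
    have cpx : c p x = b := (hsym p x).trans cxp
    have cqx : c q x = b := (hsym q x).trans cxq
    have cqp : c q p = b := (hsym q p).trans hcpq
    have hxp : x ≠ p := fun h => hxu (h ▸ hp)
    have hxq : x ≠ q := fun h => hxu (h ▸ hq)
    refine ⟨b, insert x (insert p {q}), ?_, ?_, ?_⟩
    · intro a ha
      simp only [Finset.mem_insert, Finset.mem_singleton] at ha
      rcases ha with rfl | rfl | rfl
      · exact hxt
      · exact hut hp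
      · exact hut hq
    · rw [Finset.card_insert_of_notMem (by simp [hxp, hxq]),
        Finset.card_insert_of_notMem (by simp [hpqne]), Finset.card_singleton]
    · intro i hi j hj hij
      simp only [Finset.mem_insert, Finset.mem_singleton] at hi hj
      rcases hi with rfl | rfl | rfl <;> rcases hj with rfl | rfl | rfl <;>
        first | exact absurd rfl hij | assumption
  · push_neg at hpq
    exact ⟨!b, u, hut, hu3, fun i hi j hj hij => bool_resolve (hpq i hi j hj hij)⟩

theorem hasRamsey_nine : hasRamsey 9 3 4 := by
  intro c hsym
  by_contra hcon
  rw [not_or] at hcon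
  obtain ⟨h1, h2⟩ := hcon
  -- red and blue neighborhoods
  set R : Fin 9 → Finset (Fin 9) :=
    fun i => Finset.univ.filter (fun j => j ≠ i ∧ c i j = true) with hRdef
  set B : Fin 9 → Finset (Fin 9) :=
    fun i => Finset.univ.filter (fun j => j ≠ i ∧ c i j = false) with hBdef
  -- red degree at most 3
  have hR3 : ∀ i, (R i).card ≤ 3 := by
    intro i
    by_contra hge
    push_neg at hge
    obtain ⟨t, hts, ht4⟩ := Finset.exists_subset_card_eq (show 4 ≤ (R i).card by omega)
    have hmem : ∀ j ∈ t, j ≠ i ∧ c i j = true :=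
      fun j hj => (Finset.mem_filter.mp (hts hj)).2
    by_cases hpq : ∃ p ∈ t, ∃ q ∈ t, p ≠ q ∧ c p q = true
    · obtain ⟨p, hp, q, hq, hpqne, hcpq⟩ := hpq
      have cip := (hmem p hp).2
      have ciq := (hmem q hq).2
      have cpi : c p i = true := (hsym p i).trans cip
      have cqi : c q i = true := (hsym q i).trans ciq
      have cqp : c q p = true := (hsym q p).trans hcpq
      have hip : i ≠ p := fun h => (hmem p hp).1 h.symm
      have hiq : i ≠ q := fun h => (hmem q hq).1 h.symm
      refine h1 ⟨insert i (insert p {q}), ?_, ?_⟩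
      · rw [Finset.card_insert_of_notMem (by simp [hip, hiq]),
          Finset.card_insert_of_notMem (by simp [hpqne]), Finset.card_singleton]
      · intro a ha b hb hab
        simp only [Finset.mem_insert, Finset.mem_singleton] at ha hb
        rcases ha with rfl | rfl | rfl <;> rcases hb with rfl | rfl | rfl <;>
          first | exact absurd rfl hab | assumption
    · push_neg at hpq
      refine h2 ⟨t, ht4, fun a ha b hb hab => ?_⟩
      have := hpq a ha b hb hab
      exact (Bool.not_eq_true _).mp this
  -- blue degree at most 5
  have hB5 : ∀ i, (B i).card ≤ 5 := by
    intro i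
    by_contra hge
    push_neg at hge
    obtain ⟨t, hts, ht6⟩ := Finset.exists_subset_card_eq (show 6 ≤ (B i).card by omega)
    have hmem : ∀ j ∈ t, j ≠ i ∧ c i j = false :=
      fun j hj => (Finset.mem_filter.mp (hts hj)).2
    obtain ⟨b, u, hut, hu3, hmono⟩ := ramsey33 c hsym t ht6
    cases b with
    | true => exact h1 ⟨u, hu3, hmono⟩
    | false =>
      have hiu : i ∉ u := fun h => (hmem i (hut h)).1 rfl
      refine h2 ⟨insert i u, ?_, ?_⟩
      · rw [Finset.card_insert_of_notMem hiu, hu3]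
      · intro a ha b hb hab
        simp only [Finset.mem_insert] at ha hb
        rcases ha with ha' | ha <;> rcases hb with hb' | hb
        · exact absurd (ha'.trans hb'.symm) hab
        · rw [ha']; exact (hmem b (hut hb)).2
        · rw [hb']; exact (hsym a i).trans (hmem a (hut ha)).2
        · exact hmono a ha b hb hab
  -- degree sum: R i ∪ B i = univ.erase i
  have hRB : ∀ i, (R i).card + (B i).card = 8 := by
    intro i
    have hdisj : Disjoint (R i) (B i) := by
      rw [Finset.disjoint_left]
      intro a haR haB
      have h1' := (Finset.mem_filter.mp haR).2.2
      have h2' := (Finset.mem_filter.mp haB).2.2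
      rw [h1'] at h2'
      exact Bool.noConfusion h2'
    have hunion : R i ∪ B i = Finset.univ.erase i := by
      ext j
      simp only [hRdef, hBdef, Finset.mem_union, Finset.mem_filter, Finset.mem_univ,
        true_and, Finset.mem_erase, and_true]
      constructor
      · rintro (⟨h, _⟩ | ⟨h, _⟩) <;> exact h
      · intro h
        cases hcb : c i j
        · exact Or.inr ⟨h, rfl⟩
        · exact Or.inl ⟨h, rfl⟩
    have := Finset.card_union_of_disjoint hdisj
    rw [hunion, Finset.card_erase_of_mem (Finset.mem_univ i), Finset.card_univ] at this
    simpa using this.symm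
  have hdeg : ∀ i, (R i).card = 3 := fun i => by have := hR3 i; have := hB5 i; have := hRB i; omega
  -- parity contradiction
  set P : Finset (Fin 9 × Fin 9) :=
    (Finset.univ ×ˢ Finset.univ).filter (fun p => p.2 ≠ p.1 ∧ c p.1 p.2 = true) with hPdef
  have hPsum : P.card = ∑ i, (R i).card := by
    rw [Finset.card_eq_sum_card_fiberwise (f := Prod.fst) (t := Finset.univ)
      (fun p _ => Finset.mem_univ _)]
    refine Finset.sum_congr rfl fun i _ => ?_
    apply Finset.card_nbij' Prod.snd (fun j => (i, j))
    · intro p hp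
      simp only [Finset.mem_coe, hPdef, Finset.mem_filter, Finset.mem_product] at hp
      obtain ⟨⟨_, hne, hc⟩, h1'⟩ := hp
      simp only [Finset.mem_coe, hRdef, Finset.mem_filter, Finset.mem_univ, true_and]
      rw [h1'] at hne hc
      exact ⟨hne, hc⟩
    · intro j hj
      simp only [Finset.mem_coe, hRdef, Finset.mem_filter, Finset.mem_univ, true_and] at hj
      simp only [Finset.mem_coe, hPdef, Finset.mem_filter, Finset.mem_product, Finset.mem_univ, true_and]
      exact ⟨⟨hj.1, hj.2⟩, trivial⟩
    · intro p hp
      simp only [Finset.mem_coe, Finset.mem_filter] at hp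
      rw [← hp.2]
    · intro j _
      rfl
  have hPeven : P.card = 2 * (P.filter fun p => p.1 < p.2).card := by
    have hsplit : P = (P.filter fun p => p.1 < p.2) ∪ (P.filter fun p => p.2 < p.1) := by
      ext p
      simp only [Finset.mem_union, Finset.mem_filter]
      constructor
      · intro hp
        have hne : p.2 ≠ p.1 := (Finset.mem_filter.mp hp).2.1
        rcases lt_or_gt_of_ne hne with h | h
        · exact Or.inr ⟨hp, h⟩
        · exact Or.inl ⟨hp, h⟩
      · rintro (⟨hp, _⟩ | ⟨hp, _⟩) <;> exact hp
    have hdisj : Disjoint (P.filter fun p => p.1 < p.2) (P.filter fun p => p.2 < p.1) := by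
      rw [Finset.disjoint_left]
      intro p hp1 hp2
      exact absurd ((Finset.mem_filter.mp hp1).2) (not_lt_of_gt (Finset.mem_filter.mp hp2).2)
    have hcardeq : (P.filter fun p => p.2 < p.1).card = (P.filter fun p => p.1 < p.2).card := by
      apply Finset.card_nbij' (i := Prod.swap) (j := Prod.swap)
      · intro p hp
        simp only [Finset.mem_coe, hPdef, Finset.mem_filter, Finset.mem_product, Finset.mem_univ, true_and,
          Prod.fst_swap, Prod.snd_swap] at hp ⊢
        obtain ⟨⟨hne, hc⟩, hlt⟩ := hp
        exact ⟨⟨hne.symm, (hsym p.2 p.1).trans hc⟩, hlt⟩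
      · intro p hp
        simp only [Finset.mem_coe, hPdef, Finset.mem_filter, Finset.mem_product, Finset.mem_univ, true_and,
          Prod.fst_swap, Prod.snd_swap] at hp ⊢
        obtain ⟨⟨hne, hc⟩, hlt⟩ := hp
        exact ⟨⟨hne.symm, (hsym p.2 p.1).trans hc⟩, hlt⟩
      · intro p _; rfl
      · intro p _; rfl
    have htot := congrArg Finset.card hsplit
    rw [Finset.card_union_of_disjoint hdisj] at htot
    omega
  have hsum27 : ∑ i, (R i).card = 27 := by
    rw [Finset.sum_congr rfl (fun i _ => hdeg i)]
    simp
  rw [hPsum, hsum27] at hPeven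
  omega

/-- The Ramsey property is monotone in `N`. -/
lemma hasRamsey_mono {n N m k : ℕ} (h : hasRamsey n m k) (hle : n ≤ N) :
    hasRamsey N m k := by
  intro c hsym
  have key : ∀ (b : Bool) (s : Finset (Fin n)) (m' : ℕ), s.card = m' →
      (∀ i ∈ s, ∀ j ∈ s, i ≠ j → c (Fin.castLE hle i) (Fin.castLE hle j) = b) →
      ∃ s' : Finset (Fin N), s'.card = m' ∧ ∀ i ∈ s', ∀ j ∈ s', i ≠ j → c i j = b := by
    intro b s m' hc hm
    refine ⟨s.map (Fin.castLEEmb hle), by simp [hc], ?_⟩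
    intro i hi j hj hij
    simp only [Finset.mem_map, Fin.castLEEmb_apply] at hi hj
    obtain ⟨a, ha, rfl⟩ := hi
    obtain ⟨a', ha', rfl⟩ := hj
    exact hm a ha a' ha' (fun h => hij (h ▸ rfl))
  rcases h (fun i j => c (Fin.castLE hle i) (Fin.castLE hle j)) (fun i j => hsym _ _) with
    ⟨s, hc, hm⟩ | ⟨s, hc, hm⟩
  · exact Or.inl (key true s m hc hm)
  · exact Or.inr (key false s k hc hm)

/-- The lower-bound coloring on 8 vertices: red iff circulant distance in {1,4,7}. -/
def lowerColoring : Fin 8 → Fin 8 → Bool := fun i j =>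
  let d := (i.val + 8 - j.val) % 8
  d == 1 || d == 4 || d == 7

set_option maxRecDepth 20000 in
theorem not_hasRamsey_eight : ¬ hasRamsey 8 3 4 := by
  intro h
  exact absurd (h lowerColoring (by decide)) (by decide)

/-- `R(3, 4) = 9`: every 2-coloring of `K₉` contains a red triangle or a blue `K₄`,
and there is a 2-coloring of `K₈` with neither. -/
theorem ramsey_three_four :
    hasRamsey 9 3 4 ∧ ¬ hasRamsey 8 3 4 ∧ ramseyNumber 3 4 = 9 := by
  refine ⟨hasRamsey_nine, not_hasRamsey_eight, ?_⟩
  apply le_antisymm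
  · exact Nat.sInf_le hasRamsey_nine
  · show 9 ≤ sInf {N | hasRamsey N 3 4}
    by_contra hlt
    push_neg at hlt
    have hne : {N | hasRamsey N 3 4}.Nonempty := ⟨9, hasRamsey_nine⟩
    have hmem := Nat.sInf_mem hne
    exact not_hasRamsey_eight (hasRamsey_mono hmem (by omega))
end

section
/- For every k ≥ 1, the independence number of the Andrásfai graph H_{3k-1} is exactly k. -/
/-- The Andrásfai graph `H_{3k-1}`: vertex set `ZMod (3k-1)`, with `i ~ j` iff
`i - j ≡ r (mod 3k-1)` for some `r` with `k ≤ r ≤ 2k - 1`. -/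
def andrasfaiGraph (k : ℕ) : SimpleGraph (ZMod (3 * k - 1)) :=
  SimpleGraph.fromRel (fun i j => k ≤ (i - j).val ∧ (i - j).val ≤ 2 * k - 1)

lemma val_sub_natCast {N : ℕ} [NeZero N] (z : ZMod N) (m : ℕ) (h : m ≤ z.val) :
    (z - (m : ZMod N)).val = z.val - m := by
  have h1 : z - (m : ZMod N) = ((z.val - m : ℕ) : ZMod N) := by
    rw [Nat.cast_sub h, ZMod.natCast_val, ZMod.cast_id]
  rw [h1, ZMod.val_natCast, Nat.mod_eq_of_lt (by have := z.val_lt; omega)]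

lemma self_eq_val_cast {N : ℕ} [NeZero N] (z : ZMod N) : ((z.val : ℕ) : ZMod N) = z := by
  rw [ZMod.natCast_val, ZMod.cast_id]

/-- For every `k ≥ 1`, the independence number of the Andrásfai graph `H_{3k-1}`
is exactly `k`: there is an independent set of size `k`, and every independent
set has size at most `k`. -/
theorem andrasfai_independence_number (k : ℕ) (hk : 1 ≤ k) :
    (∃ s : Finset (ZMod (3 * k - 1)), s.card = k ∧
        ∀ i ∈ s, ∀ j ∈ s, ¬ (andrasfaiGraph k).Adj i j) ∧
    ∀ s : Finset (ZMod (3 * k - 1)),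
        (∀ i ∈ s, ∀ j ∈ s, ¬ (andrasfaiGraph k).Adj i j) → s.card ≤ k := by
  haveI : NeZero (3 * k - 1) := ⟨by omega⟩
  have hNlt : ∀ z : ZMod (3 * k - 1), z.val < 3 * k - 1 := fun z => z.val_lt
  -- value of (i - j : ZMod N) for naturals
  have cast_sub_val : ∀ i j : ℕ, j ≤ i → i - j < 3 * k - 1 →
      ((i : ZMod (3 * k - 1)) - (j : ZMod (3 * k - 1))).val = i - j := by
    intro i j hij hlt
    rw [← Nat.cast_sub hij, ZMod.val_natCast, Nat.mod_eq_of_lt hlt]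
  constructor
  · -- lower bound: {0,...,k-1}
    refine ⟨(Finset.range k).image (fun m : ℕ => (m : ZMod (3 * k - 1))), ?_, ?_⟩
    · rw [Finset.card_image_of_injOn, Finset.card_range]
      intro i hi j hj hij
      simp only [Finset.mem_coe, Finset.mem_range] at hi hj
      have := congrArg ZMod.val hij
      rwa [ZMod.val_natCast, ZMod.val_natCast, Nat.mod_eq_of_lt (by omega),
        Nat.mod_eq_of_lt (by omega)] at this
    · intro x hx y hy
      simp only [Finset.mem_image, Finset.mem_range] at hx hy
      obtain ⟨i, hi, rfl⟩ := hx
      obtain ⟨j, hj, rfl⟩ := hy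
      rw [andrasfaiGraph, SimpleGraph.fromRel_adj]
      rintro ⟨hne, h | h⟩
      · rcases le_or_gt j i with hij | hij
        · rw [cast_sub_val i j hij (by omega)] at h; omega
        · have : (i : ZMod (3 * k - 1)) = ((i + (3 * k - 1) : ℕ) : ZMod (3 * k - 1)) := by
            push_cast [ZMod.natCast_self]; ring
          rw [this, cast_sub_val (i + (3 * k - 1)) j (by omega) (by omega)] at h
          omega
      · rcases le_or_gt i j with hij | hij
        · rw [cast_sub_val j i hij (by omega)] at h; omega
        · have : (j : ZMod (3 * k - 1)) = ((j + (3 * k - 1) : ℕ) : ZMod (3 * k - 1)) := by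
            push_cast [ZMod.natCast_self]; ring
          rw [this, cast_sub_val (j + (3 * k - 1)) i (by omega) (by omega)] at h
          omega
  · -- upper bound
    intro s hs
    rcases s.eq_empty_or_nonempty with rfl | ⟨a, ha⟩
    · simp
    have hc : ∃ c : ZMod (3 * k - 1), c = a - ((k - 1 : ℕ) : ZMod (3 * k - 1)) := ⟨_, rfl⟩
    obtain ⟨c, hc⟩ := hc
    -- Step A: all values ≤ 2k-2
    have stepA : ∀ x ∈ s, (x - c).val ≤ 2 * k - 2 := by
      intro x hx
      have hxc : x - c = ((((x - a).val + (k - 1)) : ℕ) : ZMod (3 * k - 1)) := by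
        rw [hc]
        push_cast
        rw [self_eq_val_cast]
        ring
      have hvx : (x - c).val = ((x - a).val + (k - 1)) % (3 * k - 1) := by
        rw [hxc, ZMod.val_natCast]
      set d := (x - a).val with hd
      have hdlt : d < 3 * k - 1 := hNlt _
      have hcase : x = a ∨ d < k ∨ 2 * k ≤ d := by
        by_cases hxa : x = a
        · exact Or.inl hxa
        · have := hs x hx a ha
          rw [andrasfaiGraph, SimpleGraph.fromRel_adj] at this
          push_neg at this
          obtain ⟨h3, _⟩ := this hxa
          omega
      rcases hcase with rfl | hcase
      · have : d = 0 := by rw [hd, sub_self, ZMod.val_zero]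
        rw [hvx, this, Nat.mod_eq_of_lt (by omega)]; omega
      · rcases hcase with h1 | h1
        · rw [hvx, Nat.mod_eq_of_lt (by omega)]; omega
        · rw [hvx, Nat.mod_eq_sub_mod (by omega), Nat.mod_eq_of_lt (by omega)]; omega
    -- Step B: spread < k
    have stepB : ∀ x ∈ s, ∀ y ∈ s, (x - c).val ≤ (y - c).val → (y - c).val - (x - c).val < k := by
      intro x hx y hy hle
      by_contra hcon
      push_neg at hcon
      have hyx : y - x = ((((y - c).val - (x - c).val : ℕ)) : ZMod (3 * k - 1)) := by
        rw [Nat.cast_sub hle]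
        simp only [self_eq_val_cast]
        ring
      have hvalyx : (y - x).val = (y - c).val - (x - c).val := by
        rw [hyx, ZMod.val_natCast, Nat.mod_eq_of_lt (by have := hNlt (y - c); omega)]
      have hne : y ≠ x := by
        intro h
        rw [h] at hcon
        omega
      have hA := stepA y hy
      exact hs y hy x hx (by
        rw [andrasfaiGraph, SimpleGraph.fromRel_adj]
        exact ⟨hne, Or.inl ⟨by omega, by omega⟩⟩)
    -- Step C: injection into range k
    obtain ⟨x₀, hx₀, hmin⟩ := s.exists_min_image (fun x => (x - c).val) ⟨a, ha⟩
    have hcard : s.card ≤ (Finset.range k).card := by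
      apply Finset.card_le_card_of_injOn (fun x => (x - c).val - (x₀ - c).val)
      · intro x hx
        rw [Finset.mem_coe, Finset.mem_range]
        exact stepB x₀ hx₀ x hx (hmin x hx)
      · intro x hx y hy hxy
        simp only [] at hxy
        have hvx : (x - c).val = (y - c).val := by
          have h1 := hmin x hx
          have h2 := hmin y hy
          omega
        have : x - c = y - c := by
          rw [← self_eq_val_cast (x - c), ← self_eq_val_cast (y - c)]
          exact congrArg _ hvx
        exact sub_left_injective this
    rwa [Finset.card_range] at hcard
end

section
/- For every k ≥ 2, R(3, k+1) ≥ 3k: there exists a triangle-free graph on 3k-1 vertices with no independent set of size k+1. -/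
namespace RamseyLBAux

variable {N : ℕ} [NeZero N]

lemma fin_split (x y z : Fin N) :
    (x - z).val = (x - y).val + (y - z).val ∨
    (x - z).val + N = (x - y).val + (y - z).val := by
  have h1 : (x - y) + (y - z) = x - z := sub_add_sub_cancel x y z
  have h2 := Fin.val_add (x - y) (y - z)
  rw [h1] at h2
  have ha : (x - y).val < N := (x - y).isLt
  have hb : (y - z).val < N := (y - z).isLt
  rcases lt_or_ge ((x - y).val + (y - z).val) N with h | h
  · left; rw [h2, Nat.mod_eq_of_lt h]
  · right
    rw [h2, Nat.mod_eq_sub_mod h, Nat.mod_eq_of_lt (by omega)]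
    omega

lemma fin_sub_ne_zero {x y : Fin N} (h : x ≠ y) : (x - y).val ≠ 0 := by
  intro h0
  exact (sub_ne_zero.mpr h) (Fin.ext h0)

lemma fin_sub_antisymm {x y : Fin N} (h : x ≠ y) :
    (x - y).val + (y - x).val = N := by
  rcases fin_split x y x with hs | hs
  · have h0 : (x - x).val = 0 := by simp
    have := fin_sub_ne_zero h
    omega
  · have h0 : (x - x).val = 0 := by simp
    omega

/-- In an independent set, there is a "minimum" under the transitive tournament. -/
lemma exists_min (hN3 : N % 3 = 2) (s : Finset (Fin N))
    (hind : ∀ x ∈ s, ∀ y ∈ s, x ≠ y → (x - y).val % 3 ≠ 1)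
    (hne : s.Nonempty) :
    ∃ a ∈ s, ∀ b ∈ s, b ≠ a → (b - a).val % 3 = 0 := by
  classical
  induction s using Finset.cons_induction with
  | empty => exact absurd hne (by simp)
  | cons x s hx ih =>
    rcases s.eq_empty_or_nonempty with rfl | hsne
    · exact ⟨x, by simp, by simp⟩
    · obtain ⟨a', ha's, ha'min⟩ := ih
        (fun u hu v hv huv => hind u (Finset.mem_cons_of_mem hu) v (Finset.mem_cons_of_mem hv) huv)
        hsne
      have hxa' : x ≠ a' := fun h => hx (h ▸ ha's)
      by_cases h0 : (x - a').val % 3 = 0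
      · refine ⟨a', Finset.mem_cons_of_mem ha's, fun b hb hba' => ?_⟩
        rcases Finset.mem_cons.mp hb with rfl | hb
        · exact h0
        · exact ha'min b hb hba'
      · -- then a' - x ≡ 0, and x is the min
        have hanti := fin_sub_antisymm hxa'
        have hxadj : (x - a').val % 3 ≠ 1 :=
          hind x (Finset.mem_cons_self x s) a' (Finset.mem_cons_of_mem ha's) hxa'
        have hax : (a' - x).val % 3 = 0 := by omega
        refine ⟨x, Finset.mem_cons_self x s, fun b hb hbx => ?_⟩
        rcases Finset.mem_cons.mp hb with rfl | hb
        · exact absurd rfl hbx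
        · by_cases hba' : b = a'
          · simpa [hba'] using hax
          · have hb0 : (b - a').val % 3 = 0 := ha'min b hb hba'
            have hbxadj : (b - x).val % 3 ≠ 1 :=
              hind b (Finset.mem_cons_of_mem hb) x (Finset.mem_cons_self x s) hbx
            rcases fin_split b a' x with hs' | hs' <;> omega

/-- Growth lemma: from the minimum of an independent set we can reach far. -/
lemma grow (hN3 : N % 3 = 2) :
    ∀ m : ℕ, ∀ s : Finset (Fin N), s.card = m → ∀ a : Fin N, a ∉ s →
    (∀ x ∈ insert a s, ∀ y ∈ insert a s, x ≠ y → (x - y).val % 3 ≠ 1) →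
    (∀ b ∈ s, (b - a).val % 3 = 0) →
    ∃ b ∈ insert a s, 3 * m ≤ (b - a).val := by
  classical
  intro m
  induction m with
  | zero => intro s _ a _ _ _; exact ⟨a, Finset.mem_insert_self a s, Nat.zero_le _⟩
  | succ m ih =>
    intro s hcard a has hind hmin0
    have hsne : s.Nonempty := Finset.card_pos.mp (by omega)
    have hindS : ∀ x ∈ s, ∀ y ∈ s, x ≠ y → (x - y).val % 3 ≠ 1 := fun u hu v hv huv =>
      hind u (Finset.mem_insert_of_mem hu) v (Finset.mem_insert_of_mem hv) huv
    obtain ⟨a', ha's, ha'min⟩ := exists_min hN3 s hindS hsne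
    have hins : insert a' (s.erase a') = s := Finset.insert_erase ha's
    obtain ⟨b, hb, hbval⟩ := ih (s.erase a') (by rw [Finset.card_erase_of_mem ha's, hcard]; omega) a'
      (Finset.notMem_erase a' s)
      (by rw [hins]; exact hindS)
      (fun b hb => ha'min b (Finset.mem_of_mem_erase hb) (Finset.ne_of_mem_erase hb))
    rw [hins] at hb
    have hba : b ≠ a := fun h => has (h ▸ hb)
    have ha'a : a' ≠ a := fun h => has (h ▸ ha's)
    have hb3 : (b - a').val % 3 = 0 := by
      by_cases hba' : b = a'
      · simp [hba']
      · exact ha'min b hb hba'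
    have ha'3 : (a' - a).val % 3 = 0 := hmin0 a' ha's
    have ha'ne : (a' - a).val ≠ 0 := fin_sub_ne_zero ha'a
    have hbadj : (b - a).val % 3 ≠ 1 :=
      hind b (Finset.mem_insert_of_mem hb) a (Finset.mem_insert_self a s) hba
    refine ⟨b, Finset.mem_insert_of_mem hb, ?_⟩
    rcases fin_split b a' a with hs' | hs' <;> omega

end RamseyLBAux

/-- For every `k ≥ 2`, `R(3, k+1) ≥ 3k`: there is a triangle-free graph on
`3k - 1` vertices with no independent set of size `k + 1` (i.e. whose complement
has no clique of size `k + 1`). -/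
theorem ramsey_three_lower_bound (k : ℕ) (hk : 2 ≤ k) :
    ∃ G : SimpleGraph (Fin (3 * k - 1)), G.CliqueFree 3 ∧ Gᶜ.CliqueFree (k + 1) := by
  classical
  haveI : NeZero (3 * k - 1) := ⟨by omega⟩
  have hN3 : (3 * k - 1) % 3 = 2 := by omega
  set N := 3 * k - 1 with hN
  refine ⟨⟨fun x y => (x - y).val % 3 = 1, ?_, ?_⟩, ?_, ?_⟩
  · -- symmetric
    refine ⟨fun x y h => ?_⟩
    have hxy : x ≠ y := by
      intro h'; subst h'; simp at h
    have := RamseyLBAux.fin_sub_antisymm hxy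
    omega
  · -- irreflexive
    refine ⟨fun x h => ?_⟩
    simp at h
  · -- triangle free
    intro s hs
    obtain ⟨a, b, c, hab, hac, hbc, habc⟩ := Finset.card_eq_three.mp hs.2
    have h1 : (a - b).val % 3 = 1 := hs.1 (by simp [habc]) (by simp [habc]) hab
    have h2 : (b - c).val % 3 = 1 := hs.1 (by simp [habc]) (by simp [habc]) hbc
    have h3 : (a - c).val % 3 = 1 := hs.1 (by simp [habc]) (by simp [habc]) hac
    rcases RamseyLBAux.fin_split a b c with hs' | hs' <;> omega
  · -- complement is (k+1)-clique free
    intro t ht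
    have hind : ∀ x ∈ t, ∀ y ∈ t, x ≠ y → (x - y).val % 3 ≠ 1 := by
      intro x hx y hy hxy
      have := ht.1 hx hy hxy
      exact fun h => this.2 h
    have htne : t.Nonempty := Finset.card_pos.mp (by rw [ht.card_eq]; omega)
    obtain ⟨a, hat, hamin⟩ := RamseyLBAux.exists_min hN3 t hind htne
    have hins : insert a (t.erase a) = t := Finset.insert_erase hat
    obtain ⟨b, hb, hbval⟩ := RamseyLBAux.grow hN3 k (t.erase a)
      (by rw [Finset.card_erase_of_mem hat, ht.card_eq]; omega) a
      (Finset.notMem_erase a t)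
      (by rw [hins]; exact hind)
      (fun b hb => hamin b (Finset.mem_of_mem_erase hb) (Finset.ne_of_mem_erase hb))
    have : (b - a).val < N := (b - a).isLt
    omega
end

section
/- In every 3-coloring of the edges of the complete graph on 17 vertices there is a monochromatic triangle. -/
open Finset

lemma triangle_core (c : Fin 17 → Fin 17 → Fin 3) (hsymm : ∀ i j, c i j = c j i)
    (v : Fin 17) (U : Finset (Fin 17)) (hv : v ∉ U) (hU : 3 ≤ U.card)
    (p q : Fin 3)
    (hvp : ∀ u ∈ U, c v u = p)
    (hpq : ∀ i ∈ U, ∀ j ∈ U, i ≠ j → c i j = p ∨ c i j = q) :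
    ∃ i j k : Fin 17, i ≠ j ∧ j ≠ k ∧ i ≠ k ∧ c i j = c j k ∧ c j k = c i k := by
  by_cases h : ∃ i ∈ U, ∃ j ∈ U, i ≠ j ∧ c i j = p
  · obtain ⟨i, hi, j, hj, hij, hc⟩ := h
    refine ⟨i, v, j, ?_, ?_, hij, ?_, ?_⟩
    · rintro rfl; exact hv hi
    · rintro rfl; exact hv hj
    · rw [hsymm i v, hvp i hi, hvp j hj]
    · rw [hvp j hj, hc]
  · push_neg at h
    obtain ⟨i, j, k, hi, hj, hk, hij, hik, hjk⟩ := Finset.two_lt_card_iff.mp (show 2 < U.card by omega)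
    have cij : c i j = q := (hpq i hi j hj hij).resolve_left (h i hi j hj hij)
    have cjk : c j k = q := (hpq j hj k hk hjk).resolve_left (h j hj k hk hjk)
    have cik : c i k = q := (hpq i hi k hk hik).resolve_left (h i hi k hk hik)
    exact ⟨i, j, k, hij, hjk, hik, by rw [cij, cjk], by rw [cjk, cik]⟩

lemma r33 (c : Fin 17 → Fin 17 → Fin 3) (hsymm : ∀ i j, c i j = c j i)
    (S : Finset (Fin 17)) (hS : 6 ≤ S.card) (b₁ b₂ : Fin 3)
    (hcol : ∀ i ∈ S, ∀ j ∈ S, i ≠ j → c i j = b₁ ∨ c i j = b₂) :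
    ∃ i j k : Fin 17, i ≠ j ∧ j ≠ k ∧ i ≠ k ∧ c i j = c j k ∧ c j k = c i k := by
  obtain ⟨v, hv⟩ := Finset.card_pos.mp (by omega : 0 < S.card)
  have hS' : 5 ≤ (S.erase v).card := by
    rw [Finset.card_erase_of_mem hv]; omega
  have hsplit := Finset.card_filter_add_card_filter_not
    (s := S.erase v) (p := fun u => c v u = b₁)
  by_cases h1 : 3 ≤ ((S.erase v).filter (fun u => c v u = b₁)).card
  · refine triangle_core c hsymm v _ ?_ h1 b₁ b₂ ?_ ?_
    · intro hmem
      exact (Finset.mem_erase.mp (Finset.mem_of_mem_filter v hmem)).1 rfl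
    · intro u hu; exact (Finset.mem_filter.mp hu).2
    · intro i hi j hj hij
      exact hcol i (Finset.mem_of_mem_erase (Finset.mem_of_mem_filter i hi)) j
        (Finset.mem_of_mem_erase (Finset.mem_of_mem_filter j hj)) hij
  · have h2 : 3 ≤ ((S.erase v).filter (fun u => ¬ c v u = b₁)).card := by omega
    refine triangle_core c hsymm v _ ?_ h2 b₂ b₁ ?_ ?_
    · intro hmem
      exact (Finset.mem_erase.mp (Finset.mem_of_mem_filter v hmem)).1 rfl
    · intro u hu
      have hu' := Finset.mem_filter.mp hu
      have hmem := Finset.mem_erase.mp hu'.1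
      exact (hcol v hv u hmem.2 (fun e => hmem.1 e.symm)).resolve_left hu'.2
    · intro i hi j hj hij
      exact (hcol i (Finset.mem_of_mem_erase (Finset.mem_of_mem_filter i hi)) j
        (Finset.mem_of_mem_erase (Finset.mem_of_mem_filter j hj)) hij).symm

/-- Every 3-coloring of the edges of `K₁₇` contains a monochromatic triangle. -/
theorem K17_three_coloring_monochromatic_triangle
    (c : Fin 17 → Fin 17 → Fin 3) (hsymm : ∀ i j, c i j = c j i) :
    ∃ i j k : Fin 17, i ≠ j ∧ j ≠ k ∧ i ≠ k ∧ c i j = c j k ∧ c j k = c i k := by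
  set S : Finset (Fin 17) := Finset.univ.erase 0 with hSdef
  have hScard : S.card = 16 := by
    rw [hSdef, Finset.card_erase_of_mem (Finset.mem_univ _), Finset.card_univ]
    rfl
  have hfib : S.card = ∑ a : Fin 3, (S.filter (fun j => c 0 j = a)).card :=
    Finset.card_eq_sum_card_fiberwise (fun x _ => Finset.mem_univ (c 0 x))
  rw [Fin.sum_univ_three] at hfib
  have hbig : ∃ a : Fin 3, 6 ≤ (S.filter (fun j => c 0 j = a)).card := by
    by_contra hcon
    push_neg at hcon
    have h0 := hcon 0; have h1 := hcon 1; have h2 := hcon 2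
    omega
  obtain ⟨a, ha⟩ := hbig
  set T := S.filter (fun j => c 0 j = a) with hTdef
  have hT0 : ∀ j ∈ T, j ≠ 0 ∧ c 0 j = a := by
    intro j hj
    have := Finset.mem_filter.mp hj
    exact ⟨(Finset.mem_erase.mp this.1).1, this.2⟩
  by_cases h : ∃ i ∈ T, ∃ j ∈ T, i ≠ j ∧ c i j = a
  · obtain ⟨i, hi, j, hj, hij, hc⟩ := h
    refine ⟨i, 0, j, (hT0 i hi).1, fun e => (hT0 j hj).1 e.symm, hij, ?_, ?_⟩
    · rw [hsymm i 0, (hT0 i hi).2, (hT0 j hj).2]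
    · rw [(hT0 j hj).2, hc]
  · push_neg at h
    have hkey : ∃ b₁ b₂ : Fin 3, ∀ x : Fin 3, x ≠ a → x = b₁ ∨ x = b₂ := by
      fin_cases a
      · exact ⟨1, 2, by decide⟩
      · exact ⟨0, 2, by decide⟩
      · exact ⟨0, 1, by decide⟩
    obtain ⟨b₁, b₂, hb⟩ := hkey
    exact r33 c hsymm T ha b₁ b₂ (fun i hi j hj hij => hb _ (h i hi j hj hij))
end

section
/- (Turán's theorem) Let n = hk + r with 0 ≤ r < k and k ≥ 1. Any simple graph on n vertices containing no complete subgraph on k+1 vertices has at most (1/2)(n² - r²)(k-1)/k + r(r-1)/2 edges. -/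
open Finset SimpleGraph

private lemma countRes (k c : ℕ) (hk : 1 ≤ k) (hc : c < k) (n : ℕ) :
    #((Finset.range n).filter (fun v => v % k = c)) =
      n / k + if c < n % k then 1 else 0 := by
  induction n with
  | zero => simp
  | succ n ih =>
    rw [Finset.range_add_one, Finset.filter_insert]
    have hs : n % k < k := Nat.mod_lt _ (by omega)
    have hd := Nat.div_add_mod n k
    rw [Nat.mul_comm] at hd
    rcases eq_or_lt_of_le (Nat.succ_le_of_lt hs) with he | hlt
    · have hrep : n + 1 = (n / k + 1) * k := by rw [Nat.add_mul, Nat.one_mul]; omega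
      have hdiv : (n + 1) / k = n / k + 1 := by
        rw [hrep, Nat.mul_div_cancel _ (by omega : 0 < k)]
      have hmod : (n + 1) % k = 0 := by rw [hrep, Nat.mul_mod_left]
      by_cases hcc : n % k = c
      · rw [if_pos hcc, Finset.card_insert_of_notMem (by simp), ih, hdiv, hmod]
        split_ifs <;> omega
      · rw [if_neg hcc, ih, hdiv, hmod]; split_ifs <;> omega
    · have hrep : n + 1 = (n % k + 1) + n / k * k := by omega
      have hdiv : (n + 1) / k = n / k := by
        rw [hrep, Nat.add_mul_div_right _ _ (by omega : 0 < k),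
          Nat.div_eq_of_lt hlt, Nat.zero_add]
      have hmod : (n + 1) % k = n % k + 1 := by
        rw [hrep, Nat.add_mul_mod_self_right, Nat.mod_eq_of_lt hlt]
      by_cases hcc : n % k = c
      · rw [if_pos hcc, Finset.card_insert_of_notMem (by simp), ih, hdiv, hmod]
        split_ifs <;> omega
      · rw [if_neg hcc, ih, hdiv, hmod]; split_ifs <;> omega

private lemma finCount (n k c : ℕ) (hk : 1 ≤ k) (hc : c < k) :
    #(Finset.univ.filter (fun w : Fin n => w.val % k = c)) =
      n / k + if c < n % k then 1 else 0 := by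
  rw [← countRes k c hk hc n, Finset.card_filter, Finset.card_filter,
    Fin.sum_univ_eq_sum_range (fun i => if i % k = c then 1 else 0)]

/-- Edge count of the Turán graph. -/
private lemma turan_count (n k : ℕ) (hk : 1 ≤ k) :
    n % k * ((n / k + 1) * (n / k + 1)) + (k - n % k) * (n / k * (n / k))
      + 2 * #(turanGraph n k).edgeFinset = n * n := by
  classical
  set cnt : ℕ → ℕ := fun c => n / k + if c < n % k then 1 else 0 with hcnt
  have hdeg : ∀ v : Fin n, (turanGraph n k).degree v = n - cnt (v.val % k) := by
    intro v
    rw [degree, neighborFinset_eq_filter]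
    have : (Finset.univ.filter (fun w : Fin n => (turanGraph n k).Adj v w)) =
        Finset.univ \ (Finset.univ.filter (fun w : Fin n => w.val % k = v.val % k)) := by
      ext w
      simp [turanGraph, eq_comm]
      exact Finset.mem_filter.trans (by simp)
    rw [this, Finset.card_sdiff_of_subset (Finset.filter_subset _ _),
      finCount n k _ hk (Nat.mod_lt _ (by omega))]
    simp [cnt, Finset.card_univ]
  have hcle : ∀ c, c < k → cnt c ≤ n := by
    intro c hclt
    have h1 : cnt c = #((Finset.range n).filter (fun v => v % k = c)) :=
      (countRes k c hk hclt n).symm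
    rw [h1]
    simpa using Finset.card_filter_le (Finset.range n) (fun v => v % k = c)
  have hsum : (∑ v : Fin n, cnt (v.val % k)) + 2 * #(turanGraph n k).edgeFinset = n * n := by
    rw [← sum_degrees_eq_twice_card_edges, ← Finset.sum_add_distrib]
    have : ∀ v : Fin n, cnt (v.val % k) + (turanGraph n k).degree v = n := by
      intro v
      rw [hdeg v]
      exact Nat.add_sub_cancel' (hcle _ (Nat.mod_lt _ (by omega)))
    rw [Finset.sum_congr rfl (fun v _ => this v)]
    simp [Finset.card_univ, Nat.mul_comm]
  have hfib : (∑ v : Fin n, cnt (v.val % k)) = ∑ c ∈ Finset.range k, cnt c * cnt c := by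
    rw [Fin.sum_univ_eq_sum_range (fun i => cnt (i % k))]
    rw [← Finset.sum_fiberwise_of_maps_to (g := fun i => i % k)
      (t := Finset.range k) (fun x _ => Finset.mem_range.2 (Nat.mod_lt _ (by omega)))]
    refine Finset.sum_congr rfl fun c hc => ?_
    have : ∀ x ∈ (Finset.range n).filter (fun i => i % k = c), cnt (x % k) = cnt c := by
      intro x hx
      rw [(Finset.mem_filter.1 hx).2]
    rw [Finset.sum_congr rfl this, Finset.sum_const, smul_eq_mul,
      countRes k c hk (Finset.mem_range.1 hc) n]
  have hsplit : (∑ c ∈ Finset.range k, cnt c * cnt c) =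
      n % k * ((n / k + 1) * (n / k + 1)) + (k - n % k) * (n / k * (n / k)) := by
    have hmk : n % k < k := Nat.mod_lt _ (by omega)
    rw [Finset.range_eq_Ico, ← Finset.sum_Ico_consecutive _ (Nat.zero_le (n % k)) hmk.le]
    have h1 : (∑ c ∈ Finset.Ico 0 (n % k), cnt c * cnt c) =
        n % k * ((n / k + 1) * (n / k + 1)) := by
      rw [Finset.sum_congr rfl (fun c hc => ?_), Finset.sum_const, Nat.card_Ico,
        smul_eq_mul, Nat.sub_zero]
      have : c < n % k := (Finset.mem_Ico.1 hc).2
      simp [cnt, this]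
    have h2 : (∑ c ∈ Finset.Ico (n % k) k, cnt c * cnt c) =
        (k - n % k) * (n / k * (n / k)) := by
      rw [Finset.sum_congr rfl (fun c hc => ?_), Finset.sum_const, Nat.card_Ico,
        smul_eq_mul]
      have : ¬ c < n % k := not_lt.2 (Finset.mem_Ico.1 hc).1
      simp [cnt, this]
    rw [h1, h2]
  rw [hfib, hsplit] at hsum
  exact hsum

/-- Turán's theorem: if `n = h*k + r` with `0 ≤ r < k`, `k ≥ 1`, then any simple
graph on `n` vertices with no complete subgraph on `k + 1` vertices has at most
`(1/2)(n² - r²)(k-1)/k + r(r-1)/2` edges (all divisions here are exact). -/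
theorem turan (n h k r : ℕ) (hk : 1 ≤ k) (hn : n = h * k + r) (hr : r < k)
    (G : SimpleGraph (Fin n)) (hfree : G.CliqueFree (k + 1)) :
    G.edgeSet.ncard ≤ (n ^ 2 - r ^ 2) * (k - 1) / (2 * k) + r * (r - 1) / 2 := by
  classical
  -- reduce to the Turán graph
  obtain ⟨H, hdec, hH⟩ := exists_isTuranMaximal (V := Fin n) (r := k) (by omega)
  have hle : #G.edgeFinset ≤ #H.edgeFinset := hH.2 hfree
  have hiso := hH.nonempty_iso_turanGraph
  rw [Fintype.card_fin] at hiso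
  have hHt : #H.edgeFinset = #(turanGraph n k).edgeFinset :=
    hiso.some.card_edgeFinset_eq
  have hmod : n % k = r := by
    rw [hn, Nat.mul_comm, Nat.mul_add_mod, Nat.mod_eq_of_lt hr]
  have hdiv : n / k = h := by
    rw [hn, Nat.mul_comm, Nat.mul_add_div (by omega : 0 < k),
      Nat.div_eq_of_lt hr, Nat.add_zero]
  have master := turan_count n k hk
  rw [hmod, hdiv] at master
  set E := #(turanGraph n k).edgeFinset with hE
  set A := h * (h * k + 2 * r) * (k - 1) with hA
  set B := r * (r - 1) with hB
  have hX : (n ^ 2 - r ^ 2) * (k - 1) / (2 * k) = A / 2 := by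
    have hsq : n ^ 2 = h * k * (h * k + 2 * r) + r ^ 2 := by rw [hn]; ring
    rw [hsq, Nat.add_sub_cancel, hA,
      show h * k * (h * k + 2 * r) * (k - 1) = k * (h * (h * k + 2 * r) * (k - 1)) by ring,
      show 2 * k = k * 2 by ring, Nat.mul_div_mul_left _ _ (by omega : 0 < k)]
  have h2E : 2 * E = A + B := by
    obtain ⟨m, rfl⟩ : ∃ m, k = r + m + 1 := ⟨k - r - 1, by omega⟩
    have e1 : r + m + 1 - r = m + 1 := by omega
    have e2 : r + m + 1 - 1 = r + m := by omega
    rw [e1, hn] at master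
    rw [hA, hB, e2]
    rcases Nat.eq_zero_or_pos r with rfl | hrpos
    · zify at master ⊢
      linear_combination master
    · obtain ⟨s, rfl⟩ : ∃ s, r = s + 1 := ⟨r - 1, by omega⟩
      have e3 : s + 1 - 1 = s := by omega
      rw [e3]
      zify at master ⊢
      linear_combination master
  have hEvenA : Even A := by
    rcases Nat.even_or_odd k with hke | hko
    · exact (((hke.mul_left h).add (even_two_mul r)).mul_left h).mul_right _
    · exact (Nat.Odd.sub_odd hko odd_one).mul_left _
  have hEvenB : Even B := by
    rcases Nat.even_or_odd r with hre | hro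
    · exact hre.mul_right _
    · exact (Nat.Odd.sub_odd hro odd_one).mul_left _
  obtain ⟨a, ha⟩ := hEvenA
  obtain ⟨b, hb⟩ := hEvenB
  have hnc : G.edgeSet.ncard = #G.edgeFinset := by
    rw [Set.ncard_eq_toFinset_card']
    congr 1
  rw [hnc, hX]
  omega
end
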